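/- Log-concavity bound: for α > 0, a finite set S, weights x : S → ℝ with x(i) > 0, X = Σ_{i∈S} x(i) ≤ 1, Y = 1 - X > 0, the quantity ψ'(α) - Σ_{i∈S} x(i)² ψ'(α x(i)) - Y² ψ'(αY) is ≤ 0. -/

import Mathlib

open Real

/-- The trigamma function: second derivative of `log ∘ Γ`. -/
noncomputable def trigamma (z : ℝ) : ℝ :=
  iteratedDeriv 2 (fun x => Real.log (Real.Gamma x)) z

open Filter Topology Set Finset

namespace TrigammaAux

/-- The series `∑ 1/(x+k)²`. -/
noncomputable def T (x : ℝ) : ℝ := ∑' k : ℕ, ((x + k) ^ 2)⁻¹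

/-- The series `∑ 1/(x+k)³`. -/
noncomputable def S3 (x : ℝ) : ℝ := ∑' k : ℕ, ((x + k) ^ 3)⁻¹

/-- Digamma-like series. -/
noncomputable def psiAux (x : ℝ) : ℝ := ∑' k : ℕ, ((1 + (k : ℝ))⁻¹ - (x + 1 + k)⁻¹)

/-- The digamma function as a series. -/
noncomputable def psiR (x : ℝ) : ℝ := -Real.eulerMascheroniConstant - x⁻¹ + psiAux x

lemma telescope_hasSum {c : ℕ → ℝ} (hmono : ∀ k, c (k + 1) ≤ c k)
    (hlim : Filter.Tendsto c atTop (𝓝 0)) :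
    HasSum (fun k => c k - c (k + 1)) (c 0) := by
  rw [hasSum_iff_tendsto_nat_of_nonneg (fun k => sub_nonneg.mpr (hmono k))]
  have : ∀ n, ∑ i ∈ Finset.range n, (c i - c (i + 1)) = c 0 - c n := by
    intro n; exact Finset.sum_range_sub' c n
  simp_rw [this]
  simpa using tendsto_const_nhds.sub hlim

lemma tendsto_inv_add_atTop (x : ℝ) : Tendsto (fun n : ℕ => (x + n)⁻¹) atTop (𝓝 0) := by
  apply tendsto_inv_atTop_zero.comp
  exact tendsto_atTop_add_const_left atTop x tendsto_natCast_atTop_atTop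

lemma hasSum_telescope_inv {x : ℝ} (hx : 0 < x) :
    HasSum (fun k : ℕ => (x + k)⁻¹ - (x + (k + 1 : ℕ))⁻¹) x⁻¹ := by
  have h0 : (x + (0 : ℕ)) = x := by simp
  have := telescope_hasSum (c := fun k : ℕ => (x + k)⁻¹) ?_ (tendsto_inv_add_atTop x)
  · simpa [h0] using this
  · intro k
    apply inv_anti₀ (by positivity)
    push_cast; linarith

lemma hasSum_telescope_inv_sq {x : ℝ} (hx : 0 < x) :
    HasSum (fun k : ℕ => ((x + k) ^ 2)⁻¹ - ((x + (k + 1 : ℕ)) ^ 2)⁻¹) (x ^ 2)⁻¹ := by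
  have := telescope_hasSum (c := fun k : ℕ => ((x + k) ^ 2)⁻¹) ?_ ?_
  · simpa using this
  · intro k
    apply inv_anti₀ (by positivity)
    have : (0:ℝ) < x + k := by positivity
    push_cast
    nlinarith
  · have := (tendsto_inv_add_atTop x)
    have h2 : Tendsto (fun n : ℕ => (x + n)⁻¹ * (x + n)⁻¹) atTop (𝓝 (0 * 0)) := this.mul this
    simpa [pow_two] using h2

lemma inv_sq_le_telescope {x : ℝ} (hx : 0 < x) (k : ℕ) :
    ((x + (k + 1 : ℕ)) ^ 2)⁻¹ ≤ (x + k)⁻¹ - (x + (k + 1 : ℕ))⁻¹ := by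
  have h1 : (0:ℝ) < x + k := by positivity
  have h2 : (0:ℝ) < x + (k + 1 : ℕ) := by positivity
  have key : (x + k)⁻¹ - (x + (k+1:ℕ))⁻¹ = ((x + k) * (x + (k+1:ℕ)))⁻¹ := by
    push_cast
    rw [mul_inv]
    rw [inv_sub_inv h1.ne' (by positivity : (0:ℝ) < x + ((k:ℝ)+1)).ne']
    rw [div_eq_mul_inv, mul_inv]
    ring_nf
  rw [key]
  apply inv_anti₀ (by positivity)
  push_cast
  nlinarith

lemma summable_inv_sq {x : ℝ} (hx : 0 < x) : Summable (fun k : ℕ => ((x + k) ^ 2)⁻¹) := by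
  rw [← summable_nat_add_iff 1]
  apply Summable.of_nonneg_of_le (fun k => by positivity)
    (fun k => ?_) ((hasSum_telescope_inv hx).summable)
  exact inv_sq_le_telescope hx k

lemma summable_inv_cube {x : ℝ} (hx : 0 < x) : Summable (fun k : ℕ => ((x + k) ^ 3)⁻¹) := by
  apply Summable.of_nonneg_of_le (fun k => by positivity) (fun k => ?_)
    ((summable_inv_sq hx).mul_left x⁻¹)
  have h1 : (0:ℝ) < x + k := by positivity
  rw [← mul_inv]
  apply inv_anti₀ (by positivity)
  nlinarith

lemma T_le {x : ℝ} (hx : 0 < x) : T x ≤ x⁻¹ + (x ^ 2)⁻¹ := by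
  have hsum := summable_inv_sq hx
  have hshift : Summable (fun k : ℕ => ((x + (k + 1 : ℕ)) ^ 2)⁻¹) :=
    (summable_inv_sq (by linarith : (0:ℝ) < x + 1)).congr
      (fun k => by push_cast; ring_nf)
  have h0 : T x = ((x + (0:ℕ)) ^ 2)⁻¹ + ∑' k : ℕ, ((x + (k + 1 : ℕ)) ^ 2)⁻¹ := by
    rw [T, Summable.tsum_eq_zero_add hsum]
  have h1 : ∑' k : ℕ, ((x + (k + 1 : ℕ)) ^ 2)⁻¹ ≤ x⁻¹ := by
    calc ∑' k : ℕ, ((x + (k + 1 : ℕ)) ^ 2)⁻¹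
        ≤ ∑' k : ℕ, ((x + k)⁻¹ - (x + (k + 1 : ℕ))⁻¹) := by
          apply Summable.tsum_le_tsum (fun k => inv_sq_le_telescope hx k) hshift
            (hasSum_telescope_inv hx).summable
      _ = x⁻¹ := (hasSum_telescope_inv hx).tsum_eq
  rw [h0]
  simp only [Nat.cast_zero, add_zero]
  linarith

lemma cube_pair_ineq {a : ℝ} (ha : 0 < a) :
    (a ^ 2)⁻¹ - ((a + 1) ^ 2)⁻¹ ≤ (a ^ 3)⁻¹ + ((a + 1) ^ 3)⁻¹ := by
  have h1 : (0:ℝ) < a + 1 := by linarith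
  rw [← sub_nonneg]
  have key : (a ^ 3)⁻¹ + ((a + 1) ^ 3)⁻¹ - ((a ^ 2)⁻¹ - ((a + 1) ^ 2)⁻¹)
      = (2 * a + 1) / (a ^ 3 * (a + 1) ^ 3) := by
    field_simp
    ring
  rw [key]
  positivity

lemma S3_ge {x : ℝ} (hx : 0 < x) : (x ^ 2)⁻¹ + (x ^ 3)⁻¹ ≤ 2 * S3 x := by
  have hsum := summable_inv_cube hx
  have hshift : Summable (fun k : ℕ => ((x + (k + 1 : ℕ)) ^ 3)⁻¹) :=
    (summable_inv_cube (by linarith : (0:ℝ) < x + 1)).congr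
      (fun k => by push_cast; ring_nf)
  have h0 : S3 x = ((x + (0:ℕ)) ^ 3)⁻¹ + ∑' k : ℕ, ((x + (k + 1 : ℕ)) ^ 3)⁻¹ := by
    rw [S3, Summable.tsum_eq_zero_add hsum]
  have hpair : (x ^ 2)⁻¹ ≤ ∑' k : ℕ, (((x + k) ^ 3)⁻¹ + ((x + (k + 1 : ℕ)) ^ 3)⁻¹) := by
    calc (x ^ 2)⁻¹ = ∑' k : ℕ, (((x + k) ^ 2)⁻¹ - ((x + (k + 1 : ℕ)) ^ 2)⁻¹) :=
          (hasSum_telescope_inv_sq hx).tsum_eq.symm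
      _ ≤ _ := by
          apply Summable.tsum_le_tsum (fun k => ?_) (hasSum_telescope_inv_sq hx).summable
            (hsum.add hshift)
          have hxk : (0:ℝ) < x + k := by positivity
          have := cube_pair_ineq hxk
          push_cast
          push_cast at this
          convert this using 3
          · rfl
          · ring
          · ring
  have hadd : ∑' k : ℕ, (((x + k) ^ 3)⁻¹ + ((x + (k + 1 : ℕ)) ^ 3)⁻¹)
      = S3 x + (S3 x - ((x + (0:ℕ)) ^ 3)⁻¹) := by
    rw [Summable.tsum_add hsum hshift]
    congr 1
    rw [h0]; ring
  rw [hadd] at hpair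
  simp only [Nat.cast_zero, add_zero] at hpair h0
  linarith

lemma nonneg_T {x : ℝ} (hx : 0 < x) : 0 ≤ T x :=
  tsum_nonneg (fun k => by positivity)

/-- The tail bound terms. -/
lemma psi_term_le {x c : ℝ} (hx : 0 < x) (hxc : x ≤ c) (k : ℕ) :
    (1 + (k : ℝ))⁻¹ - (x + 1 + k)⁻¹ ≤ c * ((1 + (k:ℝ)) ^ 2)⁻¹ := by
  have h1 : (0:ℝ) < 1 + k := by positivity
  have h2 : (0:ℝ) < x + 1 + k := by linarith
  have key : (1 + (k : ℝ))⁻¹ - (x + 1 + k)⁻¹ = x / ((1 + k) * (x + 1 + k)) := by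
    rw [inv_sub_inv h1.ne' h2.ne']
    congr 1
    ring
  have key2 : c * ((1 + (k:ℝ)) ^ 2)⁻¹ = c / ((1 + (k:ℝ)) ^ 2) := by
    rw [div_eq_mul_inv]
  rw [key, key2, div_le_div_iff₀ (by positivity) (by positivity)]
  have hA : ((1:ℝ)+k)^2 ≤ (1+k)*(x+1+k) := by nlinarith
  calc x * (1 + (k:ℝ))^2 ≤ c * ((1+k)*(x+1+k)) :=
        mul_le_mul hxc hA (by positivity) (hx.le.trans hxc)
    _ = c * ((1 + (k:ℝ)) * (x + 1 + ↑k)) := by ring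

/-- Summability of the digamma series terms. -/
lemma summable_psi_terms {x : ℝ} (hx : 0 < x) :
    Summable (fun k : ℕ => ((1 + (k : ℝ))⁻¹ - (x + 1 + k)⁻¹)) := by
  apply Summable.of_nonneg_of_le (fun k => ?_) (fun k => psi_term_le hx le_rfl k)
    ((summable_inv_sq one_pos).mul_left x)
  apply sub_nonneg.mpr
  apply inv_anti₀ (by positivity)
  linarith

/-- `logGammaSeq` derivative sequence. -/
noncomputable def Dseq (n : ℕ) (y : ℝ) : ℝ :=
  Real.log n - ∑ m ∈ Finset.range (n + 1), (y + m)⁻¹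

lemma hasDerivAt_logGammaSeq {n : ℕ} {y : ℝ} (hy : 0 < y) :
    HasDerivAt (fun z => Real.BohrMollerup.logGammaSeq z n) (Dseq n y) y := by
  unfold Real.BohrMollerup.logGammaSeq Dseq
  apply HasDerivAt.sub
  · simpa using ((hasDerivAt_id y).mul_const (Real.log n)).add_const (Real.log (Nat.factorial n))
  · have : ∀ m ∈ Finset.range (n + 1),
        HasDerivAt (fun z : ℝ => Real.log (z + m)) ((y + m)⁻¹) y := by
      intro m _
      have hpos : (0:ℝ) < y + m := by positivity
      have := ((hasDerivAt_id y).add_const (m:ℝ)).log hpos.ne'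
      simpa using this
    simpa using HasDerivAt.fun_sum this

lemma Dseq_eq (n : ℕ) {y : ℝ} (hy : 0 < y) :
    Dseq n y = (Real.log n - ∑ m ∈ Finset.range n, (1 + (m:ℝ))⁻¹) - y⁻¹
      + ∑ m ∈ Finset.range n, ((1 + (m:ℝ))⁻¹ - (y + 1 + m)⁻¹) := by
  unfold Dseq
  rw [Finset.sum_range_succ']
  push_cast
  rw [Finset.sum_sub_distrib]
  have : ∀ m ∈ Finset.range n, (y + ((m:ℝ) + 1))⁻¹ = (y + 1 + m)⁻¹ := by
    intro m _; ring_nf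
  rw [Finset.sum_congr rfl this]
  ring_nf

set_option maxHeartbeats 1000000 in
/-- Uniform convergence of the derivative sequence on `Ioo 0 R`. -/
lemma tendstoUniformlyOn_Dseq {R : ℝ} (hR : 0 < R) :
    TendstoUniformlyOn Dseq psiR atTop (Set.Ioo 0 R) := by
  rw [Metric.tendstoUniformlyOn_iff]
  intro ε hε
  -- harmonic part
  have hharm : Tendsto (fun n : ℕ => Real.log n - ∑ m ∈ Finset.range n, (1 + (m:ℝ))⁻¹
      + Real.eulerMascheroniConstant) atTop (𝓝 0) := by
    have h2 : ∀ n : ℕ, ((harmonic n : ℝ)) = ∑ m ∈ Finset.range n, (1 + (m:ℝ))⁻¹ := by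
      intro n
      unfold harmonic
      push_cast
      apply Finset.sum_congr rfl
      intro m _
      norm_num [add_comm]
    have := Real.tendsto_harmonic_sub_log
    have h3 : Tendsto (fun n : ℕ => -(((harmonic n : ℝ)) - Real.log n)
        + Real.eulerMascheroniConstant) atTop (𝓝 (-Real.eulerMascheroniConstant
        + Real.eulerMascheroniConstant)) := (this.neg).add tendsto_const_nhds
    simp only [neg_add_cancel] at h3
    apply h3.congr
    intro n
    rw [h2 n]
    ring
  -- tail part
  have htail : Tendsto (fun n : ℕ => ∑' k : ℕ, R * ((1 + ((k + n : ℕ):ℝ)) ^ 2)⁻¹)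
      atTop (𝓝 0) := by
    exact tendsto_sum_nat_add (fun k : ℕ => R * ((1 + (k:ℝ)) ^ 2)⁻¹)
  rw [Metric.tendsto_nhds] at hharm htail
  filter_upwards [hharm (ε/2) (by linarith), htail (ε/2) (by linarith)] with n hn1 hn2
  intro y hy
  obtain ⟨hy0, hyR⟩ := hy
  have hsum := summable_psi_terms (x := y) hy0
  -- decompose the difference
  have hdecomp : psiR y - Dseq n y
      = -(Real.log n - ∑ m ∈ Finset.range n, (1 + (m:ℝ))⁻¹ + Real.eulerMascheroniConstant)
        + ∑' k : ℕ, ((1 + ((k + n : ℕ):ℝ))⁻¹ - (y + 1 + (k + n : ℕ))⁻¹) := by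
    rw [Dseq_eq n hy0, psiR, psiAux]
    rw [← Summable.sum_add_tsum_nat_add n hsum]
    push_cast
    ring
  rw [Real.dist_eq, hdecomp]
  have htail_bound : |∑' k : ℕ, ((1 + ((k + n : ℕ):ℝ))⁻¹ - (y + 1 + (k + n : ℕ))⁻¹)|
      ≤ ∑' k : ℕ, R * ((1 + ((k + n : ℕ):ℝ)) ^ 2)⁻¹ := by
    rw [abs_of_nonneg]
    · apply Summable.tsum_le_tsum
      · intro k
        exact psi_term_le hy0 hyR.le (k + n)
      · exact (summable_nat_add_iff n).mpr hsum
      · exact (summable_nat_add_iff n).mpr ((summable_inv_sq one_pos).mul_left R)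
    · apply tsum_nonneg
      intro k
      apply sub_nonneg.mpr
      apply inv_anti₀ (by positivity)
      push_cast
      linarith
  have h2 : |∑' k : ℕ, R * ((1 + ((k + n : ℕ):ℝ)) ^ 2)⁻¹| < ε / 2 := by
    simpa [Real.dist_eq] using hn2
  have h1 : |Real.log n - ∑ m ∈ Finset.range n, (1 + (m:ℝ))⁻¹
      + Real.eulerMascheroniConstant| < ε / 2 := by
    simpa [Real.dist_eq] using hn1
  calc |_ + _| ≤ _ + _ := abs_add_le _ _
    _ < ε := by
        rw [abs_neg]
        have := le_trans htail_bound (le_abs_self _)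
        linarith

/-- The log Gamma function has derivative `psiR` on positive reals. -/
lemma hasDerivAt_logGamma {x : ℝ} (hx : 0 < x) :
    HasDerivAt (fun y => Real.log (Real.Gamma y)) (psiR x) x := by
  refine hasDerivAt_of_tendstoUniformlyOn (isOpen_Ioo (a := (0:ℝ)) (b := x + 1))
    (tendstoUniformlyOn_Dseq (by linarith))
    (f := fun (n : ℕ) (y : ℝ) => Real.BohrMollerup.logGammaSeq y n) ?_ ?_
    (show x ∈ Set.Ioo (0:ℝ) (x+1) from ⟨hx, by linarith⟩)
  · filter_upwards with n y hy
    exact hasDerivAt_logGammaSeq hy.1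
  · intro y hy
    exact Real.BohrMollerup.tendsto_log_gamma hy.1

/-- `psiAux` has derivative `∑ 1/(x+1+k)²`. -/
lemma hasDerivAt_psiAux {x : ℝ} (hx : 0 < x) :
    HasDerivAt psiAux (∑' k : ℕ, ((x + 1 + k) ^ 2)⁻¹) x := by
  have hx2 : 0 < x / 2 := by linarith
  apply hasDerivAt_tsum_of_isPreconnected
    (u := fun k : ℕ => ((x / 2 + 1 + k) ^ 2)⁻¹)
    (g' := fun (k : ℕ) (y : ℝ) => ((y + 1 + k) ^ 2)⁻¹)
    ?_ (isOpen_Ioi (a := x/2)) (isPreconnected_Ioi)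
    ?_ ?_ (Set.mem_Ioi.mpr (by linarith : x/2 < x)) ?_ (Set.mem_Ioi.mpr (by linarith))
  · have : Summable (fun k : ℕ => (((x/2 + 1) + k) ^ 2)⁻¹) := summable_inv_sq (by linarith)
    exact this
  · intro k y hy
    have hy0 : 0 < y := lt_trans hx2 hy
    have hpos : (0:ℝ) < y + 1 + k := by positivity
    have hbase : HasDerivAt (fun z : ℝ => z + (1 + (k:ℝ))) 1 y := by
      simpa using (hasDerivAt_id y).add_const (1 + (k:ℝ))
    have h := (hbase.inv (by positivity)).const_sub ((1 + (k:ℝ))⁻¹)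
    have hfun : (fun z : ℝ => (1 + (k:ℝ))⁻¹ - (z + 1 + k)⁻¹)
        = (fun z : ℝ => (1 + (k:ℝ))⁻¹ - (z + (1 + (k:ℝ)))⁻¹) := by
      funext z
      have hz : z + 1 + (k:ℝ) = z + (1 + (k:ℝ)) := by ring
      rw [hz]
    have hval : (((y + 1 + k) ^ 2)⁻¹ : ℝ) = -(-1 / (y + (1 + (k:ℝ))) ^ 2) := by
      rw [neg_div, neg_neg, one_div]
      congr 2
      ring
    have h2 : HasDerivAt (fun z : ℝ => (1 + (k:ℝ))⁻¹ - (z + 1 + k)⁻¹)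
        (((y + 1 + k) ^ 2)⁻¹) y := by
      rw [hfun, hval]
      exact h
    exact h2
  · intro k y hy
    rw [Real.norm_eq_abs, abs_of_nonneg (by positivity)]
    apply inv_anti₀ (by positivity)
    have : x / 2 + 1 + k ≤ y + 1 + k := by
      have := Set.mem_Ioi.mp hy; linarith
    nlinarith [Set.mem_Ioi.mp hy, hx2]
  · exact summable_psi_terms hx

lemma T_shift {x : ℝ} (hx : 0 < x) :
    T x = (x ^ 2)⁻¹ + ∑' k : ℕ, ((x + 1 + k) ^ 2)⁻¹ := by
  rw [T, Summable.tsum_eq_zero_add (summable_inv_sq hx)]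
  congr 1
  · norm_num
  · apply tsum_congr
    intro k
    push_cast
    ring_nf

/-- `psiR` has derivative `T` at positive points. -/
lemma hasDerivAt_psiR {x : ℝ} (hx : 0 < x) : HasDerivAt psiR (T x) x := by
  unfold psiR
  have h1 : HasDerivAt (fun y : ℝ => -Real.eulerMascheroniConstant - y⁻¹)
      ((x ^ 2)⁻¹) x := by
    have := (hasDerivAt_inv hx.ne').const_sub (-Real.eulerMascheroniConstant)
    simpa using this
  have h2 := hasDerivAt_psiAux hx
  have := h1.add h2
  rw [T_shift hx]
  exact this

/-- The trigamma function equals the series `T` at positive points. -/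
lemma trigamma_eq {x : ℝ} (hx : 0 < x) : trigamma x = T x := by
  have hev : deriv (fun y => Real.log (Real.Gamma y)) =ᶠ[𝓝 x] psiR := by
    filter_upwards [isOpen_Ioi.mem_nhds (Set.mem_Ioi.mpr hx)] with y hy
    exact (hasDerivAt_logGamma hy).deriv
  have : trigamma x = deriv (deriv (fun y => Real.log (Real.Gamma y))) x := by
    rw [trigamma, iteratedDeriv_succ, iteratedDeriv_one]
  rw [this, hev.deriv_eq, (hasDerivAt_psiR hx).deriv]

/-- `T` has derivative `-2 * S3` at positive points. -/
lemma hasDerivAt_T {x : ℝ} (hx : 0 < x) : HasDerivAt T (-2 * S3 x) x := by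
  have hx2 : 0 < x / 2 := by linarith
  have key : HasDerivAt (fun y : ℝ => ∑' k : ℕ, ((y + k) ^ 2)⁻¹)
      (∑' k : ℕ, (-2 * ((x + k) ^ 3)⁻¹)) x := by
    apply hasDerivAt_tsum_of_isPreconnected
      (u := fun k : ℕ => 2 * ((x / 2 + k) ^ 3)⁻¹)
      (g' := fun (k : ℕ) (y : ℝ) => -2 * ((y + k) ^ 3)⁻¹)
      ?_ (isOpen_Ioi (a := x/2)) (isPreconnected_Ioi)
      ?_ ?_ (Set.mem_Ioi.mpr (by linarith : x/2 < x)) ?_ (Set.mem_Ioi.mpr (by linarith))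
    · exact (summable_inv_cube hx2).mul_left 2
    · intro k y hy
      have hy0 : 0 < y := lt_trans hx2 hy
      have hpos : (0:ℝ) < y + k := by positivity
      have h := (((hasDerivAt_id y).add_const ((k:ℝ))).pow 2).inv (pow_ne_zero 2 hpos.ne')
      convert h using 1
      · rfl
      · rfl
      simp only [Pi.pow_apply, id_eq]
      field_simp
      ring
    · intro k y hy
      have hy' : x / 2 < y := Set.mem_Ioi.mp hy
      have hyk : (0:ℝ) < x/2 + k := by positivity
      have h0 : (0:ℝ) < y + k := add_pos_of_pos_of_nonneg (hx2.trans hy') (Nat.cast_nonneg k)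
      show ‖-2 * ((y + (k:ℝ)) ^ 3)⁻¹‖ ≤ 2 * ((x/2 + (k:ℝ)) ^ 3)⁻¹
      rw [Real.norm_eq_abs, neg_mul, abs_neg,
        abs_of_nonneg (mul_nonneg (by norm_num) (inv_nonneg.mpr (pow_nonneg h0.le 3)))]
      have hcmp : ((y + (k:ℝ)) ^ 3)⁻¹ ≤ ((x/2 + (k:ℝ)) ^ 3)⁻¹ := by
        apply inv_anti₀ (by positivity)
        exact pow_le_pow_left₀ hyk.le (by linarith) 3
      nlinarith
    · exact summable_inv_sq hx
  have heq : ∑' k : ℕ, (-2 * ((x + k) ^ 3)⁻¹) = -2 * S3 x := by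
    rw [S3, tsum_mul_left]
  rw [heq] at key
  exact key

/-- The function `t ↦ t * T t` is antitone on positive reals. -/
lemma mul_T_antitone {a b : ℝ} (ha : 0 < a) (hab : a ≤ b) : b * T b ≤ a * T a := by
  have hmain : AntitoneOn (fun t => t * T t) (Set.Ioi (0:ℝ)) := by
    have hd : ∀ t ∈ Set.Ioi (0:ℝ), HasDerivAt (fun t => t * T t)
        (1 * T t + t * (-2 * S3 t)) t := by
      intro t ht
      exact (hasDerivAt_id t).mul (hasDerivAt_T (Set.mem_Ioi.mp ht))
    apply antitoneOn_of_deriv_nonpos (convex_Ioi 0)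
    · intro t ht
      exact ((hd t ht).continuousAt).continuousWithinAt
    · intro t ht
      rw [interior_Ioi] at ht
      exact ((hd t ht).differentiableAt).differentiableWithinAt
    · intro t ht
      rw [interior_Ioi] at ht
      have ht0 : 0 < t := Set.mem_Ioi.mp ht
      rw [(hd t ht).deriv]
      have h1 : T t ≤ t⁻¹ + (t ^ 2)⁻¹ := T_le ht0
      have h2 : (t ^ 2)⁻¹ + (t ^ 3)⁻¹ ≤ 2 * S3 t := S3_ge ht0
      have h3 : t⁻¹ + (t ^ 2)⁻¹ = t * ((t ^ 2)⁻¹ + (t ^ 3)⁻¹) := by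
        field_simp
      have h4 : t * ((t ^ 2)⁻¹ + (t ^ 3)⁻¹) ≤ t * (2 * S3 t) :=
        mul_le_mul_of_nonneg_left h2 ht0.le
      nlinarith
  exact hmain (Set.mem_Ioi.mpr ha) (Set.mem_Ioi.mpr (lt_of_lt_of_le ha hab)) hab

end TrigammaAux

/-- Log-concavity bound: for `α > 0`, a finite set `S`, positive weights `x : S → ℝ` with
`X = ∑ x i ≤ 1` and `Y = 1 - X > 0`,
`ψ'(α) - ∑_i x i ^ 2 ψ'(α x i) - Y² ψ'(α Y) ≤ 0`. -/
theorem logconcavity_bound {S : Type*} [Fintype S]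
    (α : ℝ) (hα : 0 < α) (x : S → ℝ) (hx : ∀ i, 0 < x i)
    (X Y : ℝ) (hX : X = ∑ i, x i) (hX1 : X ≤ 1) (hY : Y = 1 - X) (hYpos : 0 < Y) :
    trigamma α - (∑ i, (x i) ^ 2 * trigamma (α * x i)) - Y ^ 2 * trigamma (α * Y) ≤ 0 := by
  open TrigammaAux in
  have hxi : ∀ i, 0 < α * x i := fun i => mul_pos hα (hx i)
  have hY' : 0 < α * Y := mul_pos hα hYpos
  have hXnonneg : 0 ≤ X := by
    rw [hX]; exact Finset.sum_nonneg (fun i _ => (hx i).le)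
  -- rewrite trigamma to T
  rw [TrigammaAux.trigamma_eq hα, TrigammaAux.trigamma_eq hY']
  rw [show (∑ i, (x i) ^ 2 * trigamma (α * x i)) = ∑ i, (x i) ^ 2 * TrigammaAux.T (α * x i)
    from Finset.sum_congr rfl fun i _ => by rw [TrigammaAux.trigamma_eq (hxi i)]]
  -- key: each α * x i ≤ α and α * Y ≤ α
  have hxle : ∀ i, α * x i ≤ α := by
    intro i
    have h1 : x i ≤ X := by
      rw [hX]
      exact Finset.single_le_sum (fun j _ => (hx j).le) (Finset.mem_univ i)
    nlinarith
  have hYle : α * Y ≤ α := by nlinarith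
  have hkey : ∀ i, α * TrigammaAux.T α ≤ (α * x i) * TrigammaAux.T (α * x i) := fun i =>
    TrigammaAux.mul_T_antitone (hxi i) (hxle i)
  have hkeyY : α * TrigammaAux.T α ≤ (α * Y) * TrigammaAux.T (α * Y) :=
    TrigammaAux.mul_T_antitone hY' hYle
  -- main inequality at level α²
  have hmain : α ^ 2 * TrigammaAux.T α
      ≤ α ^ 2 * ((∑ i, (x i) ^ 2 * TrigammaAux.T (α * x i))
        + Y ^ 2 * TrigammaAux.T (α * Y)) := by
    have hsplit : α ^ 2 * TrigammaAux.T α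
        = (∑ i, (α * x i) * (α * TrigammaAux.T α)) + (α * Y) * (α * TrigammaAux.T α) := by
      rw [← Finset.sum_mul]
      have : (∑ i, α * x i) = α * X := by
        rw [hX, Finset.mul_sum]
      rw [this]
      have h2 : α * X + α * Y = α := by rw [hY]; ring
      calc α ^ 2 * TrigammaAux.T α = (α * X + α * Y) * (α * TrigammaAux.T α) := by
            rw [h2]; ring
        _ = α * X * (α * TrigammaAux.T α) + α * Y * (α * TrigammaAux.T α) := by ring
    rw [hsplit]
    have hstep : (∑ i, (α * x i) * (α * TrigammaAux.T α)) + (α * Y) * (α * TrigammaAux.T α)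
        ≤ (∑ i, (α * x i) * ((α * x i) * TrigammaAux.T (α * x i)))
          + (α * Y) * ((α * Y) * TrigammaAux.T (α * Y)) := by
      apply add_le_add
      · apply Finset.sum_le_sum
        intro i _
        exact mul_le_mul_of_nonneg_left (hkey i) (hxi i).le
      · exact mul_le_mul_of_nonneg_left hkeyY hY'.le
    apply hstep.trans
    apply le_of_eq
    rw [mul_add, Finset.mul_sum]
    congr 1
    · apply Finset.sum_congr rfl
      intro i _
      ring
    · ring
  have hα2 : (0:ℝ) < α ^ 2 := by positivity
  nlinarith [hmain]
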